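/- Let T_n(z) be the 2×2 matrix with entries T_n(1,1) = z + \bar{α}_n α_{n-1}, T_n(1,2) = \bar{α}_n/b_n, T_n(2,1) = α_{n-1} b_n, T_n(2,2) = 1. Then the Szegő recurrences imply the matrix identity Y_{n+1}(z) diag(1, z) = T_n(z) Y_n(z), where Y_n is the Riemann–Hilbert solution matrix built from Φ_n, G_n, Φ^*_{n-1}, G^*_{n-1}. -/

import Mathlib

open Complex Matrix

/-- Let `T_n(z)` be the 2×2 matrix with entries
`T_n(1,1) = z + conj(α_n) α_{n-1}`, `T_n(1,2) = conj(α_n)/b_n`,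
`T_n(2,1) = α_{n-1} b_n`, `T_n(2,2) = 1`.  Then the Szegő recurrences imply the matrix
identity `Y_{n+1}(z) diag(1, z) = T_n(z) Y_n(z)`, where
`Y_m(z) = [[Φ_m(z), G_m(z)], [−b_{m-1}Φ*_{m-1}(z), −b_{m-1}G*_{m-1}(z)]]`.
(Reindexed: stated for `Y_{n+2}` and `Y_{n+1}`, i.e. for all `n ≥ 1`.) -/
theorem stmt11
    (Φ Φs G Gs : ℕ → ℂ → ℂ) (α : ℕ → ℂ) (b : ℕ → ℂ)
    (Y : ℕ → ℂ → Matrix (Fin 2) (Fin 2) ℂ)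
    (hbne : ∀ n, b n ≠ 0)
    (hb : ∀ n, b n = (1 - ((‖α n‖ : ℝ) : ℂ) ^ 2) * b (n + 1))
    (hrec : ∀ n (z : ℂ), Φ (n + 1) z = z * Φ n z - (starRingEnd ℂ) (α n) * Φs n z)
    (hrecs : ∀ n (z : ℂ), Φs (n + 1) z = Φs n z - α n * z * Φ n z)
    (hGrec : ∀ n (z : ℂ), G (n + 1) z = G n z - (starRingEnd ℂ) (α n) * Gs n z)
    (hGsrec : ∀ n (z : ℂ), z * Gs (n + 1) z = Gs n z - α n * G n z)
    (hY : ∀ n (z : ℂ), Y (n + 1) z =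
      !![Φ (n + 1) z, G (n + 1) z; -(b n) * Φs n z, -(b n) * Gs n z]) :
    ∀ n (z : ℂ),
      Y (n + 2) z * !![(1 : ℂ), 0; 0, z] =
        !![z + (starRingEnd ℂ) (α (n + 1)) * α n, (starRingEnd ℂ) (α (n + 1)) / b (n + 1);
           α n * b (n + 1), 1] * Y (n + 1) z := by
  intro n z
  have key : (((‖α n‖ : ℝ) : ℂ)) ^ 2 = α n * (starRingEnd ℂ) (α n) := by
    rw [Complex.mul_conj]
    norm_cast
    exact Complex.sq_norm _
  have hbn := hb n
  have hbne1 := hbne (n + 1)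
  have h1 : Y (n + 2) z = !![Φ (n + 2) z, G (n + 2) z;
      -(b (n+1)) * Φs (n+1) z, -(b (n+1)) * Gs (n+1) z] := hY (n + 1) z
  rw [h1, hY n z]
  ext i j
  fin_cases i <;> fin_cases j <;>
    simp [Matrix.mul_apply, Fin.sum_univ_two, hrec, hrecs, hGrec] <;>
    rw [hbn] <;> (try field_simp) <;> (try rw [key]) <;> (try simp only [Nat.add_comm 1 n]) <;>
    [ring;
     linear_combination (-(starRingEnd ℂ) (α (n + 1))) * hGsrec n z;
     ring;
     linear_combination (-1 : ℂ) * hGsrec n z]
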